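/- Uniform bounds for G_α: for real α ≥ 1 and 0 ≤ x ≤ 1/2, the function G_α(x) := (1-x)^α · (1 − (α/⌊α⌋)x)^{-⌊α⌋} satisfies 1 ≤ G_α(x), and moreover G_α(x) ≤ 1 + 384·x² when α ≥ 2 and G_α(x) ≤ 1 + x²·16(α-1)/(2-α)³ when 1 ≤ α < 2. -/

import Mathlib

set_option maxHeartbeats 1000000

open Set Real

/-- Uniform bounds for `G_α(x) = (1-x)^α (1-(α/⌊α⌋)x)^{-⌊α⌋}` on `0 ≤ x ≤ 1/2`,
for real `α ≥ 1`:  `1 ≤ G_α(x)`, with `G_α(x) ≤ 1 + 384 x²` when `α ≥ 2` and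
`G_α(x) ≤ 1 + 16(α-1)/(2-α)³ · x²` when `1 ≤ α < 2`. -/
theorem G_bounds (α : ℝ) (hα : 1 ≤ α) (x : ℝ) (hx : x ∈ Icc (0 : ℝ) (1 / 2)) :
    1 ≤ (1 - x) ^ α * (1 - (α / (⌊α⌋₊ : ℝ)) * x) ^ (-(⌊α⌋₊ : ℝ)) ∧
      (2 ≤ α →
        (1 - x) ^ α * (1 - (α / (⌊α⌋₊ : ℝ)) * x) ^ (-(⌊α⌋₊ : ℝ)) ≤ 1 + 384 * x ^ 2) ∧
      (α < 2 →
        (1 - x) ^ α * (1 - (α / (⌊α⌋₊ : ℝ)) * x) ^ (-(⌊α⌋₊ : ℝ))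
          ≤ 1 + x ^ 2 * (16 * (α - 1) / (2 - α) ^ 3)) := by
  obtain ⟨hx0, hx2⟩ := hx
  set n := ⌊α⌋₊ with hn
  have hn1 : 1 ≤ n := Nat.le_floor (by exact_mod_cast hα)
  have hnpos : (0:ℝ) < n := by exact_mod_cast hn1
  have hαn : (n:ℝ) ≤ α := Nat.floor_le (by linarith)
  have hαn' : α < n + 1 := Nat.lt_floor_add_one α
  have hn2 : 2 ≤ α → 2 ≤ n := fun h2 => Nat.le_floor (by exact_mod_cast h2)
  have hne : α < 2 → n = 1 := by
    intro h2
    rw [hn, Nat.floor_eq_iff' one_ne_zero]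
    push_cast
    exact ⟨hα, by linarith⟩
  clear_value n
  set p := α / (n:ℝ) with hp
  have hpn : p * n = α := by rw [hp, div_mul_cancel₀ α hnpos.ne']
  clear_value p
  have hp1 : 1 ≤ p := by
    rw [← hpn] at hαn; nlinarith
  have hp2 : p < 2 := by
    have h1n : (1:ℝ) ≤ n := by exact_mod_cast hn1
    nlinarith
  have h1x : (0:ℝ) < 1 - x := by linarith
  have hpx : (2 - p)/2 ≤ 1 - p * x := by nlinarith
  have hpx0 : 0 < 1 - p * x := by nlinarith
  have hG : (1 - x) ^ α * (1 - p * x) ^ (-(n : ℝ))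
      = ((1 - x) ^ p / (1 - p * x)) ^ n := by
    rw [Real.rpow_neg hpx0.le, div_pow, ← Real.rpow_natCast ((1-x)^p) n,
      ← Real.rpow_natCast (1 - p*x) n, ← Real.rpow_mul h1x.le, hpn, div_eq_mul_inv]
  rw [hp] at hG ⊢
  rw [← hp] at hG ⊢
  rw [hG]
  have hlow : 1 - p * x ≤ (1 - x) ^ p := by
    have := one_add_mul_self_le_rpow_one_add (s := -x) (by linarith) hp1
    rw [show (1:ℝ) + -x = 1 - x by ring] at this
    linarith [this]
  have hf1 : 1 ≤ (1 - x) ^ p / (1 - p * x) := (one_le_div hpx0).2 hlow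
  have hup : (1 - x) ^ p ≤ 1 - p * x + (p - 1) * x ^ 2 := by
    have hsplit : (1 - x) ^ p = (1 - x) * (1 - x) ^ (p - 1) := by
      rw [← Real.rpow_one_add' h1x.le (by intro h; nlinarith [h]),
        show 1 + (p - 1) = p by ring]
    have hb : (1 - x) ^ (p - 1) ≤ 1 + (p - 1) * (-x) := by
      have := rpow_one_add_le_one_add_mul_self (s := -x) (by linarith)
        (p := p - 1) (by linarith) (by linarith)
      rwa [show (1:ℝ) + -x = 1 - x by ring] at this
    calc (1 - x) ^ p = (1 - x) * (1 - x) ^ (p - 1) := hsplit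
      _ ≤ (1 - x) * (1 + (p - 1) * (-x)) := by
          apply mul_le_mul_of_nonneg_left hb h1x.le
      _ = 1 - p * x + (p - 1) * x ^ 2 := by ring
  have hfup : (1 - x) ^ p / (1 - p * x)
      ≤ (1 - p * x + (p - 1) * x ^ 2) / (1 - p * x) := by gcongr
  have hs0 : 0 ≤ (p - 1) * x ^ 2 := mul_nonneg (by linarith) (sq_nonneg x)
  refine ⟨one_le_pow₀ hf1, ?_, ?_⟩
  · -- α ≥ 2 case
    intro h2
    have hn2' : (2:ℝ) ≤ n := by exact_mod_cast hn2 h2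
    have hs : (p - 1) * n ≤ 1 := by nlinarith
    have hq : (1:ℝ)/2 ≤ 2 - p := by nlinarith
    have h2' : (1:ℝ)/4 ≤ 1 - p * x := by linarith
    have hf : (1 - x) ^ p / (1 - p * x) ≤ 1 + 4 * ((p-1) * x ^ 2) := by
      refine hfup.trans ?_
      rw [div_le_iff₀ hpx0]
      have := mul_le_mul_of_nonneg_left h2' (by linarith : (0:ℝ) ≤ 4 * ((p-1) * x^2))
      nlinarith [this]
    have hpow : ((1:ℝ) + 4 * ((p-1) * x ^ 2)) ^ n ≤ Real.exp (4 * x ^ 2) := by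
      calc ((1:ℝ) + 4 * ((p-1) * x ^ 2)) ^ n
          ≤ (Real.exp (4 * ((p-1) * x ^ 2))) ^ n := by
            apply pow_le_pow_left₀ (by linarith)
            linarith [Real.add_one_le_exp (4 * ((p-1) * x ^ 2))]
        _ = Real.exp ((n:ℝ) * (4 * ((p-1) * x ^ 2))) := (Real.exp_nat_mul _ n).symm
        _ ≤ Real.exp (4 * x ^ 2) := by
            apply Real.exp_le_exp.2
            nlinarith [sq_nonneg x, hs]
    have hfinal : Real.exp (4 * x ^ 2) ≤ 1 + 384 * x ^ 2 := by
      set u := 4 * x ^ 2 with hu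
      have hu0 : 0 ≤ u := by positivity
      have hu1 : u ≤ 1 := by nlinarith
      have h5 : (1 - u) * Real.exp u ≤ 1 := by
        have h6 := mul_le_mul_of_nonneg_right (Real.add_one_le_exp (-u)) (Real.exp_pos u).le
        rw [← Real.exp_add] at h6
        simp at h6
        linarith
      have h7 : Real.exp u ≤ Real.exp 1 := Real.exp_le_exp.2 hu1
      have h8 : Real.exp 1 < 2.7182818286 := Real.exp_one_lt_d9
      have h9 : u * Real.exp u ≤ u * 2.7182818286 :=
        mul_le_mul_of_nonneg_left (by linarith) hu0
      have hx2' : (0:ℝ) ≤ x ^ 2 := sq_nonneg x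
      nlinarith
    calc ((1 - x) ^ p / (1 - p * x)) ^ n ≤ ((1:ℝ) + 4 * ((p-1) * x ^ 2)) ^ n :=
          pow_le_pow_left₀ (by positivity) hf n
      _ ≤ Real.exp (4 * x ^ 2) := hpow
      _ ≤ 1 + 384 * x ^ 2 := hfinal
  · -- α < 2 case
    intro h2
    have hne1 := hne h2
    subst hne1
    have hpα : p = α := by rw [hp]; simp
    rw [pow_one]
    refine hfup.trans ?_
    rw [hpα] at hpx0 hpx ⊢
    rw [div_le_iff₀ hpx0]
    have hd0 : 0 < 2 - α := by linarith
    have hd1 : 2 - α ≤ 1 := by linarith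
    have key : (α - 1) ≤ 16 * (α - 1) / (2 - α) ^ 3 * ((2 - α)/2) := by
      rw [div_mul_eq_mul_div, le_div_iff₀ (by positivity)]
      have ha : (0:ℝ) ≤ α - 1 := by linarith
      have h1 : (0:ℝ) ≤ 1 - (2-α)^2 := by nlinarith
      nlinarith [mul_nonneg (mul_nonneg ha hd0.le) h1, mul_nonneg ha hd0.le]
    have hx2' : 0 ≤ x ^ 2 := sq_nonneg x
    have hc : 0 ≤ 16 * (α - 1) / (2 - α) ^ 3 := div_nonneg (by linarith) (by positivity)
    nlinarith [mul_le_mul_of_nonneg_left hpx (mul_nonneg hx2' hc),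
      mul_le_mul_of_nonneg_left key hx2', mul_nonneg (mul_nonneg hx2' hc) hpx0.le]
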